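/- The action of a proper orthochronous Lorentz transformation Λ on the open unit ball B ⊂ ℝ³ given by (v_i) ↦ (Λ_{i0} + Σ_k Λ_{ik} v_k)/(Λ_{00} + Σ_k Λ_{0k} v_k) is well defined (the denominator satisfies |Λ_{00} + Σ_k Λ_{0k} v_k| ≥ √(1 + Σ_k Λ_{0k}²) − √(Σ_k Λ_{0k}²) > 0 for |v| < 1) and is jointly continuous in (Λ, v) with respect to the operator norm on Λ and the Euclidean metric on B. -/

import Mathlib

noncomputable section

open scoped BigOperators

abbrev E3 := EuclideanSpace ℝ (Fin 3)

/-- The Minkowski quadratic form on ℝ⁴ (coordinates `Fin 4 → ℝ`). -/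
def minkQ4 (x : Fin 4 → ℝ) : ℝ := x 0 ^ 2 - ∑ i : Fin 3, x i.succ ^ 2

/-- The projective action of a Lorentz matrix on the open unit ball of ℝ³,
`v_i ↦ (Λ_{i0} + Σ_k Λ_{ik} v_k)/(Λ_{00} + Σ_k Λ_{0k} v_k)`. -/
def matAct (Λ : Matrix (Fin 4) (Fin 4) ℝ) (v : E3) : E3 := WithLp.toLp 2 (fun i : Fin 3 =>
  (Λ i.succ 0 + ∑ k : Fin 3, Λ i.succ k.succ * v k) /
    (Λ 0 0 + ∑ k : Fin 3, Λ 0 k.succ * v k))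

open Matrix
def G4 : Matrix (Fin 4) (Fin 4) ℝ := Matrix.diagonal (fun i => if i = 0 then 1 else -1)

lemma quad_eq (x : Fin 4 → ℝ) : minkQ4 x = x ⬝ᵥ G4 *ᵥ x := by
  simp [minkQ4, G4, dotProduct, Matrix.mulVec_diagonal, Fin.sum_univ_succ,
    Fin.succ_ne_zero]
  ring

lemma symm_eq (x y : Fin 4 → ℝ) : x ⬝ᵥ G4 *ᵥ y = y ⬝ᵥ G4 *ᵥ x := by
  simp only [dotProduct, Matrix.mulVec_diagonal, G4]
  exact Finset.sum_congr rfl (fun i _ => by split <;> ring)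

lemma GG : G4 * G4 = 1 := by
  simp [G4, Matrix.diagonal_mul_diagonal]
  ext i
  split_ifs <;> norm_num

lemma pol (Λ : Matrix (Fin 4) (Fin 4) ℝ)
    (hQ : ∀ x : Fin 4 → ℝ, minkQ4 (Λ.mulVec x) = minkQ4 x) (x y : Fin 4 → ℝ) :
    (Λ *ᵥ x) ⬝ᵥ G4 *ᵥ (Λ *ᵥ y) = x ⬝ᵥ G4 *ᵥ y := by
  have h1 := hQ (x + y); have h2 := hQ x; have h3 := hQ y
  rw [quad_eq, quad_eq] at h1 h2 h3
  rw [Matrix.mulVec_add] at h1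
  simp only [Matrix.mulVec_add, add_dotProduct, dotProduct_add] at h1
  have hs := symm_eq (Λ *ᵥ x) (Λ *ᵥ y)
  have hs' := symm_eq x y
  linarith

lemma transp (Λ : Matrix (Fin 4) (Fin 4) ℝ)
    (hQ : ∀ x : Fin 4 → ℝ, minkQ4 (Λ.mulVec x) = minkQ4 x) :
    Λᵀ * G4 * Λ = G4 := by
  ext i j
  have := pol Λ hQ (Pi.single i 1) (Pi.single j 1)
  simp only [Matrix.mulVec_single_one, single_dotProduct, Matrix.col_apply, mul_one, one_mul] at this
  rw [← this]
  simp [Matrix.mul_apply, dotProduct, Matrix.mulVec, Finset.mul_sum, Finset.sum_mul]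
  rw [Finset.sum_comm]
  exact Finset.sum_congr rfl fun a _ => Finset.sum_congr rfl fun b _ => by ring

lemma row00 (Λ : Matrix (Fin 4) (Fin 4) ℝ)
    (hQ : ∀ x : Fin 4 → ℝ, minkQ4 (Λ.mulVec x) = minkQ4 x) :
    Λ 0 0 ^ 2 = 1 + ∑ k : Fin 3, Λ 0 k.succ ^ 2 := by
  have hT := transp Λ hQ
  have hinv : (G4 * Λᵀ * G4) * Λ = 1 := by
    calc (G4 * Λᵀ * G4) * Λ = G4 * (Λᵀ * G4 * Λ) := by noncomm_ring
    _ = 1 := by rw [hT, GG]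
  have hinv' : Λ * (G4 * Λᵀ * G4) = 1 := mul_eq_one_comm.mp hinv
  have hrow : Λ * G4 * Λᵀ = G4 := by
    have : (Λ * G4 * Λᵀ) * G4 = 1 := by calc (Λ * G4 * Λᵀ) * G4 = Λ * (G4 * Λᵀ * G4) := by noncomm_ring
                                        _ = 1 := hinv'
    calc Λ * G4 * Λᵀ = (Λ * G4 * Λᵀ) * (G4 * G4) := by rw [GG, Matrix.mul_one]
    _ = ((Λ * G4 * Λᵀ) * G4) * G4 := by noncomm_ring
    _ = G4 := by rw [this, Matrix.one_mul]
  have h00 := congrFun (congrFun hrow 0) 0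
  simp [Matrix.mul_apply, G4, Matrix.mul_diagonal, Matrix.diagonal_apply,
    Fin.sum_univ_four, Matrix.transpose_apply] at h00
  have e1 : (0 : Fin 3).succ = (1 : Fin 4) := rfl
  have e2 : (1 : Fin 3).succ = (2 : Fin 4) := rfl
  have e3 : (2 : Fin 3).succ = (3 : Fin 4) := rfl
  rw [Fin.sum_univ_three, e1, e2, e3]
  nlinarith [h00]

lemma denom_bound (Λ : Matrix (Fin 4) (Fin 4) ℝ)
    (hQ : ∀ x : Fin 4 → ℝ, minkQ4 (Λ.mulVec x) = minkQ4 x) (h0 : 1 ≤ Λ 0 0)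
    (v : E3) (hv : ‖v‖ < 1) :
    (Real.sqrt (1 + ∑ k : Fin 3, Λ 0 k.succ ^ 2) -
        Real.sqrt (∑ k : Fin 3, Λ 0 k.succ ^ 2)
      ≤ |Λ 0 0 + ∑ k : Fin 3, Λ 0 k.succ * v k|) ∧
    0 < Λ 0 0 + ∑ k : Fin 3, Λ 0 k.succ * v k := by
  set s : ℝ := ∑ k : Fin 3, Λ 0 k.succ ^ 2 with hs
  set t : ℝ := ∑ k : Fin 3, Λ 0 k.succ * v k with ht
  have hs0 : 0 ≤ s := Finset.sum_nonneg fun k _ => sq_nonneg _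
  set w : E3 := WithLp.toLp 2 (fun k => Λ 0 k.succ : Fin 3 → ℝ) with hw
  have hwn : ‖w‖ = Real.sqrt s := by
    rw [EuclideanSpace.norm_eq]
    congr 1
    exact Finset.sum_congr rfl fun k _ => by rw [Real.norm_eq_abs, sq_abs]
  have hinner : (inner ℝ w v : ℝ) = t := by
    simp [PiLp.inner_apply, RCLike.inner_apply, map_id, ht, hw, mul_comm]
  have habs : |t| ≤ Real.sqrt s * ‖v‖ := by
    rw [← hinner, ← hwn]; exact abs_real_inner_le_norm w v
  have hvn : 0 ≤ ‖v‖ := norm_nonneg _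
  have habs' : |t| ≤ Real.sqrt s := le_trans habs (by nlinarith [Real.sqrt_nonneg s])
  have hL : Λ 0 0 = Real.sqrt (1 + s) := by
    rw [← Real.sqrt_sq (by linarith : (0:ℝ) ≤ Λ 0 0), row00 Λ hQ]
  have hlt : Real.sqrt s < Real.sqrt (1 + s) := Real.sqrt_lt_sqrt hs0 (by linarith)
  have hD : Real.sqrt (1 + s) - Real.sqrt s ≤ Λ 0 0 + t := by
    rw [hL]; cases abs_le.mp habs' with
    | intro h1 h2 => linarith
  have hpos : 0 < Λ 0 0 + t := lt_of_lt_of_le (by linarith) hD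
  exact ⟨by rwa [abs_of_pos hpos], hpos⟩

lemma contPart :
    ContinuousOn (fun p : Matrix (Fin 4) (Fin 4) ℝ × E3 => matAct p.1 p.2)
      {p | (∀ x : Fin 4 → ℝ, minkQ4 (p.1.mulVec x) = minkQ4 x) ∧
            1 ≤ p.1 0 0 ∧ ‖p.2‖ < 1} := by
  have hc2 : ∀ k : Fin 3, Continuous (fun p : Matrix (Fin 4) (Fin 4) ℝ × E3 => p.2 k) := by
    intro k
    exact ((continuous_apply k).comp (PiLp.continuous_ofLp 2 (fun _ : Fin 3 => ℝ))).comp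
      continuous_snd
  have hc1 : ∀ i j : Fin 4, Continuous (fun p : Matrix (Fin 4) (Fin 4) ℝ × E3 => p.1 i j) :=
    fun i j => continuous_fst.matrix_elem i j
  have hnum : ∀ i : Fin 3, Continuous (fun p : Matrix (Fin 4) (Fin 4) ℝ × E3 =>
      p.1 i.succ 0 + ∑ k : Fin 3, p.1 i.succ k.succ * p.2 k) := by
    intro i
    exact (hc1 i.succ 0).add (continuous_finset_sum _ fun k _ => (hc1 i.succ k.succ).mul (hc2 k))
  have hden : Continuous (fun p : Matrix (Fin 4) (Fin 4) ℝ × E3 =>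
      p.1 0 0 + ∑ k : Fin 3, p.1 0 k.succ * p.2 k) :=
    (hc1 0 0).add (continuous_finset_sum _ fun k _ => (hc1 0 k.succ).mul (hc2 k))
  refine (PiLp.continuous_toLp 2 (fun _ : Fin 3 => ℝ)).comp_continuousOn
    (f := fun p : Matrix (Fin 4) (Fin 4) ℝ × E3 => (matAct p.1 p.2).ofLp) ?_
  apply continuousOn_pi.mpr
  intro i
  apply ContinuousOn.div ((hnum i).continuousOn) (hden.continuousOn)
  rintro ⟨Λ, v⟩ ⟨hQ, h0, hv⟩
  exact ne_of_gt (denom_bound Λ hQ h0 v hv).2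

/-- The projective action of a proper orthochronous Lorentz transformation on the open
unit ball is well defined (the denominator obeys the stated lower bound and is
positive) and is jointly continuous in the matrix and the point (Fact A.12). -/
theorem stmt15 :
    (∀ Λ : Matrix (Fin 4) (Fin 4) ℝ,
      (∀ x : Fin 4 → ℝ, minkQ4 (Λ.mulVec x) = minkQ4 x) → 1 ≤ Λ 0 0 →
      ∀ v : E3, ‖v‖ < 1 →
        (Real.sqrt (1 + ∑ k : Fin 3, Λ 0 k.succ ^ 2) -
            Real.sqrt (∑ k : Fin 3, Λ 0 k.succ ^ 2)
          ≤ |Λ 0 0 + ∑ k : Fin 3, Λ 0 k.succ * v k|) ∧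
        0 < Λ 0 0 + ∑ k : Fin 3, Λ 0 k.succ * v k) ∧
    ContinuousOn (fun p : Matrix (Fin 4) (Fin 4) ℝ × E3 => matAct p.1 p.2)
      {p | (∀ x : Fin 4 → ℝ, minkQ4 (p.1.mulVec x) = minkQ4 x) ∧
            1 ≤ p.1 0 0 ∧ ‖p.2‖ < 1} :=
  ⟨fun Λ hQ h0 v hv => denom_bound Λ hQ h0 v hv, contPart⟩
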